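/- Let q be an odd prime power and let x be a generator of the cyclic group of order (q+1)/gcd(2,q-1) acting on a 2-dimensional vector space V over F_q as multiplication by u^(2(q-1)) under an identification V ≅ F_{q^2}, where u generates F_{q^2}^*. Then x acts irreducibly on V if and only if q ≠ 3. -/

import Mathlib

private lemma aux_not_dvd (k : ℕ) (hk : 2 ≤ k) :
    ¬ (4 * k * (k + 1)) ∣ (8 * k ^ 2) := by
  intro h
  have h1 : (4 * k) * (k + 1) ∣ (4 * k) * (2 * k) := by
    have : (4 * k) * (2 * k) = 8 * k ^ 2 := by ring
    rw [this]; exact h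
  have h2 : (k + 1) ∣ 2 * k := (mul_dvd_mul_iff_left (by positivity : (4 * k : ℕ) ≠ 0)).mp h1
  have h3 : (k + 1) ∣ 2 * (k + 1) := dvd_mul_left (k + 1) 2
  have h4 : (k + 1) ∣ 2 := by
    have : 2 * (k + 1) - 2 * k = 2 := by omega
    calc (k + 1) ∣ 2 * (k + 1) - 2 * k := Nat.dvd_sub h3 h2
    _ = 2 := this
  have := Nat.le_of_dvd (by norm_num) h4
  omega

/-- Lemma 6.1: the generator of `Ω₂⁻(q) ≅ C_{(q+1)/(2,q-1)}`, realized as multiplication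
by `u^(2(q-1))` on `F_{q²}` viewed as a 2-dimensional `F_q`-vector space (where `u`
generates `F_{q²}ˣ`), acts irreducibly if and only if `q ≠ 3`. -/
theorem omega_two_minus_irreducible_iff
    {K L : Type*} [Field K] [Field L] [Algebra K L] [Fintype K] [Fintype L]
    (q : ℕ) (hq : Odd q) (hq3 : 3 ≤ q)
    (hK : Fintype.card K = q) (hL : Fintype.card L = q ^ 2)
    (u : Lˣ) (hu : ∀ v : Lˣ, v ∈ Subgroup.zpowers u) :
    (∀ W : Submodule K L, (∀ v ∈ W, ((u : L) ^ (2 * (q - 1))) * v ∈ W) →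
        W = ⊥ ∨ W = ⊤) ↔ q ≠ 3 := by
  have hord : orderOf u = q ^ 2 - 1 := by
    rw [orderOf_eq_card_of_forall_mem_zpowers hu, Nat.card_units, Nat.card_eq_fintype_card, hL]
  constructor
  · -- irreducible → q ≠ 3
    intro hirr hq3'
    subst hq3'
    -- x = u^4 satisfies x^2 = 1
    have h8 : (u : L) ^ (2 * (3 - 1)) * ((u : L) ^ (2 * (3 - 1))) = 1 := by
      have : u ^ 8 = 1 := by
        have : orderOf u ∣ 8 := by rw [hord]; norm_num
        exact orderOf_dvd_iff_pow_eq_one.mp this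
      have := congrArg (Units.val) this
      push_cast at this
      norm_num
      rw [← pow_add]
      norm_num
      exact this
    have hx : (u : L) ^ (2 * (3 - 1)) = 1 ∨ (u : L) ^ (2 * (3 - 1)) = -1 :=
      mul_self_eq_one_iff.mp h8
    set W : Submodule K L := Submodule.span K {(1 : L)} with hW
    have hWinv : ∀ v ∈ W, ((u : L) ^ (2 * (3 - 1))) * v ∈ W := by
      intro v hv
      rcases hx with h | h
      · rw [h, one_mul]; exact hv
      · rw [h, neg_one_mul]; exact W.neg_mem hv
    rcases hirr W hWinv with h | h
    · have : (1 : L) ∈ W := Submodule.subset_span rfl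
      rw [h] at this
      simp at this
    · -- W = ⊤ means algebraMap surjective, card L ≤ card K
      have hsurj : Function.Surjective (algebraMap K L) := by
        intro y
        have : y ∈ W := h ▸ Submodule.mem_top
        rcases Submodule.mem_span_singleton.mp this with ⟨c, hc⟩
        exact ⟨c, by simpa [Algebra.smul_def] using hc⟩
      have := Fintype.card_le_of_surjective _ hsurj
      rw [hK, hL] at this
      omega
  · -- q ≠ 3 → irreducible
    intro hq3' W hWinv
    by_contra hcon
    push_neg at hcon
    obtain ⟨hbot, htop⟩ := hcon
    -- W is 1-dimensional; pick v ≠ 0 in W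
    obtain ⟨v, hvW, hv0⟩ := Submodule.exists_mem_ne_zero_of_ne_bot hbot
    -- finrank L = 2
    have hq1 : 2 ≤ q := by omega
    have hrank : Module.finrank K L = 2 := by
      have hcard := Module.card_eq_pow_finrank (K := K) (V := L)
      rw [hK, hL] at hcard
      exact (Nat.pow_right_injective hq1 hcard.symm)
    have : Module.Finite K L := Module.Finite.of_finite
    have hWlt : W < ⊤ := lt_top_iff_ne_top.mpr htop
    have hWrank : Module.finrank K W < 2 := hrank ▸ Submodule.finrank_lt hWlt.ne
    have hspan : Submodule.span K {v} = W := by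
      apply Submodule.eq_of_le_of_finrank_le
      · exact Submodule.span_le.mpr (by simpa using hvW)
      · rw [finrank_span_singleton hv0]; omega
    -- scalar: x * v ∈ span {v}
    have hxv : ((u : L) ^ (2 * (q - 1))) * v ∈ Submodule.span K {v} := by
      rw [hspan]; exact hWinv v hvW
    obtain ⟨c, hc⟩ := Submodule.mem_span_singleton.mp hxv
    rw [Algebra.smul_def] at hc
    have hcx : algebraMap K L c = (u : L) ^ (2 * (q - 1)) :=
      mul_right_cancel₀ hv0 hc
    have hc0 : c ≠ 0 := by
      intro h
      rw [h, map_zero] at hcx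
      exact (pow_ne_zero _ u.ne_zero) hcx.symm
    -- c^(q-1) = 1
    have hcq : c ^ (q - 1) = 1 := by
      have := FiniteField.pow_card_sub_one_eq_one c hc0
      rwa [hK] at this
    have hpow : (u : L) ^ (2 * (q - 1) * (q - 1)) = 1 := by
      rw [pow_mul, ← hcx, ← map_pow, hcq, map_one]
    have hupow : u ^ (2 * (q - 1) * (q - 1)) = 1 := by
      ext
      push_cast
      exact hpow
    have hdvd : q ^ 2 - 1 ∣ 2 * (q - 1) * (q - 1) := by
      rw [← hord]
      exact orderOf_dvd_of_pow_eq_one hupow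
    obtain ⟨k, hk⟩ := hq
    have hk2 : 2 ≤ k := by omega
    have e1 : q ^ 2 - 1 = 4 * k * (k + 1) := by
      have h1 : q ^ 2 = 4 * k ^ 2 + 4 * k + 1 := by subst hk; ring
      have h2 : 4 * k * (k + 1) = 4 * k ^ 2 + 4 * k := by ring
      omega
    have e2 : 2 * (q - 1) * (q - 1) = 8 * k ^ 2 := by
      have h1 : q - 1 = 2 * k := by omega
      rw [h1]; ring
    rw [e1, e2] at hdvd
    exact aux_not_dvd k hk2 hdvd
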